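/- Uniqueness of the Weierstrass form of a 1-form (Lemma 4.1, uniqueness part): Let n > 1 be an integer and let f = Σ_{i=0}^{n} a_i(X)·Y^{n−i} ∈ ℂ⟦X⟧[Y] be of degree n in Y with a_0(0) ≠ 0 and a_i(0) = 0 for all 1 ≤ i ≤ n (equivalently ord(f) = deg_Y(f) = n). Then for every pair R, S ∈ ℂ⟦X,Y⟧ the decomposition R = h·f_X + p·f + A, S = h·f_Y + B with h, p ∈ ℂ⟦X,Y⟧ and A, B ∈ ℂ⟦X⟧[Y] satisfying (A = 0 or deg_Y A < n) and (B = 0 or deg_Y B < n − 1) is unique: if (h₁,p₁,A₁,B₁) and (h₂,p₂,A₂,B₂) are two such decompositions of the same pair (R,S), then h₁ = h₂, p₁ = p₂, A₁ = A₂ and B₁ = B₂. -/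

import Mathlib

noncomputable section

/-- `ℂ⟦X,Y⟧`: formal power series in two variables over `ℂ`. -/
abbrev PS2 : Type := MvPowerSeries (Fin 2) ℂ

/-- Embedding of `ℂ⟦X⟧[Y]` into `ℂ⟦X,Y⟧`:
`P = Σ_j a_j(X) Y^j ↦ Σ_{i,j} (coeff of X^i in a_j) X^i Y^j`. -/
def toMv (P : Polynomial (PowerSeries ℂ)) : PS2 :=
  fun m => PowerSeries.coeff (m 0) (P.coeff (m 1))

/-- Partial derivative of a power series in `ℂ⟦X,Y⟧` with respect to variable `i`
(`pd 0` is `∂/∂X`, `pd 1` is `∂/∂Y`). -/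
def pd (i : Fin 2) (f : PS2) : PS2 :=
  fun m => ((m i + 1 : ℕ) : ℂ) * MvPowerSeries.coeff (m + Finsupp.single i 1) f

/-- `ord f`: the least total degree of a monomial occurring in `f`. -/
def tord (f : PS2) : ℕ :=
  sInf {d | ∃ m : Fin 2 →₀ ℕ, m 0 + m 1 = d ∧ MvPowerSeries.coeff m f ≠ 0}

/-- Intersection number `i₀(f,g) = dim_ℂ ℂ⟦X,Y⟧/(f,g)`. -/
def i0 (f g : PS2) : ℕ :=
  Module.finrank ℂ (PS2 ⧸ Ideal.span ({f, g} : Set PS2))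


lemma coeff_toMv (P : Polynomial (PowerSeries ℂ)) (m : Fin 2 →₀ ℕ) :
    MvPowerSeries.coeff m (toMv P) = PowerSeries.coeff (m 0) (P.coeff (m 1)) := rfl

lemma toMv_sub (A B : Polynomial (PowerSeries ℂ)) : toMv (A - B) = toMv A - toMv B := by
  ext m
  rw [map_sub, coeff_toMv, coeff_toMv, coeff_toMv, Polynomial.coeff_sub, map_sub]

lemma toMv_eq_zero {B : Polynomial (PowerSeries ℂ)} (h : toMv B = 0) : B = 0 := by
  ext j i
  have := congrArg (MvPowerSeries.coeff (Finsupp.single 0 i + Finsupp.single 1 j)) h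
  rw [coeff_toMv,
    map_zero (MvPowerSeries.coeff (Finsupp.single (0 : Fin 2) i + Finsupp.single 1 j))] at this
  have e0 : ((Finsupp.single (0 : Fin 2) i + Finsupp.single 1 j : Fin 2 →₀ ℕ)) 0 = i := by
    simp [Finsupp.single_apply]
  have e1 : ((Finsupp.single (0 : Fin 2) i + Finsupp.single 1 j : Fin 2 →₀ ℕ)) 1 = j := by
    simp [Finsupp.single_apply]
  rw [e0, e1] at this
  simpa using this

lemma key_division (d : ℕ) (P : Polynomial (PowerSeries ℂ))
    (hPd : PowerSeries.constantCoeff (P.coeff d) ≠ 0)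
    (hPj : ∀ j ≠ d, PowerSeries.constantCoeff (P.coeff j) = 0)
    (h : PS2) (B : Polynomial (PowerSeries ℂ))
    (hB : ∀ j, d ≤ j → B.coeff j = 0)
    (heq : h * toMv P = toMv B) : h = 0 ∧ B = 0 := by
  have hzero : ∀ k (m : Fin 2 →₀ ℕ), m 0 = k → h m = 0 := by
    intro k
    induction k using Nat.strong_induction_on with
    | _ k IH =>
      intro m hm
      set m' : Fin 2 →₀ ℕ := m + Finsupp.single 1 d with hm'def
      have hm'0 : m' 0 = k := by
        simp [hm'def, Finsupp.single_apply, hm]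
      have hm'1 : m' 1 = m 1 + d := by
        simp [hm'def]
      have hcoeff := congrArg (MvPowerSeries.coeff m') heq
      rw [MvPowerSeries.coeff_mul, coeff_toMv, hB (m' 1) (by omega), map_zero] at hcoeff
      have hmem : (m, Finsupp.single 1 d) ∈ Finset.HasAntidiagonal.antidiagonal m' := by
        rw [Finset.HasAntidiagonal.mem_antidiagonal]
      rw [Finset.sum_eq_single_of_mem _ hmem ?side] at hcoeff
      case side =>
        rintro ⟨p, q⟩ hb hne
        rw [Finset.HasAntidiagonal.mem_antidiagonal] at hb
        have hpq0 : p 0 + q 0 = k := by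
          have := DFunLike.congr_fun hb 0
          simpa [hm'0] using this
        have hpq1 : p 1 + q 1 = m 1 + d := by
          have := DFunLike.congr_fun hb 1
          simpa [hm'1] using this
        by_cases hp : p 0 < k
        · have : (MvPowerSeries.coeff p) h = 0 := IH (p 0) hp p rfl
          rw [this, zero_mul]
        · have hp0 : p 0 = k := by omega
          have hq0 : q 0 = 0 := by omega
          by_cases hq : q 1 = d
          · exfalso
            apply hne
            have hqeq : q = Finsupp.single 1 d := by
              ext i
              fin_cases i
              · simpa [Finsupp.single_apply] using hq0
              · simpa [Finsupp.single_apply] using hq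
            have hpeq : p = m := by
              have : p + q = m + q := by
                rw [hb, hm'def, hqeq]
              exact add_right_cancel this
            rw [hpeq, hqeq]
          · have : (MvPowerSeries.coeff q) (toMv P) = 0 := by
              rw [coeff_toMv, hq0, PowerSeries.coeff_zero_eq_constantCoeff]
              exact hPj (q 1) hq
            rw [this, mul_zero]
      have hterm : (MvPowerSeries.coeff (Finsupp.single 1 d)) (toMv P)
          = PowerSeries.constantCoeff (P.coeff d) := by
        rw [coeff_toMv]
        simp [Finsupp.single_apply]
      rw [hterm] at hcoeff
      have := mul_eq_zero.mp hcoeff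
      tauto
  have h0 : h = 0 := by ext m; exact hzero (m 0) m rfl
  refine ⟨h0, toMv_eq_zero ?_⟩
  rw [← heq, h0, zero_mul]

lemma pd_one_toMv (f : Polynomial (PowerSeries ℂ)) :
    pd 1 (toMv f) = toMv (Polynomial.derivative f) := by
  funext m
  show ((m 1 + 1 : ℕ) : ℂ) * MvPowerSeries.coeff (m + Finsupp.single 1 1) (toMv f)
      = PowerSeries.coeff (m 0) ((Polynomial.derivative f).coeff (m 1))
  rw [coeff_toMv]
  have e0 : ((m + Finsupp.single 1 1 : Fin 2 →₀ ℕ)) 0 = m 0 := by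
    simp [Finsupp.single_apply]
  have e1 : ((m + Finsupp.single 1 1 : Fin 2 →₀ ℕ)) 1 = m 1 + 1 := by
    simp [Finsupp.single_apply]
  rw [e0, e1, Polynomial.coeff_derivative]
  have ecast : ((m 1 : PowerSeries ℂ) + 1) = PowerSeries.C ((m 1 : ℂ) + 1) := by
    rw [map_add, map_natCast, map_one (PowerSeries.C)]
  rw [ecast, PowerSeries.coeff_mul_C]
  push_cast
  ring

/-- Uniqueness of the Weierstrass form of a 1-form (Lemma 4.1, uniqueness part). -/
theorem weierstrass_form_uniqueness
    (n : ℕ) (hn : 1 < n) (f : Polynomial (PowerSeries ℂ))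
    (hdeg : f.natDegree = n)
    (ha0 : PowerSeries.constantCoeff (f.coeff n) ≠ 0)
    (hai : ∀ j < n, PowerSeries.constantCoeff (f.coeff j) = 0)
    (R S : PS2)
    (h₁ p₁ h₂ p₂ : PS2) (A₁ B₁ A₂ B₂ : Polynomial (PowerSeries ℂ))
    (hA₁ : A₁ = 0 ∨ A₁.natDegree < n) (hB₁ : B₁ = 0 ∨ B₁.natDegree < n - 1)
    (hA₂ : A₂ = 0 ∨ A₂.natDegree < n) (hB₂ : B₂ = 0 ∨ B₂.natDegree < n - 1)
    (hR₁ : R = h₁ * pd 0 (toMv f) + p₁ * toMv f + toMv A₁)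
    (hS₁ : S = h₁ * pd 1 (toMv f) + toMv B₁)
    (hR₂ : R = h₂ * pd 0 (toMv f) + p₂ * toMv f + toMv A₂)
    (hS₂ : S = h₂ * pd 1 (toMv f) + toMv B₂) :
    h₁ = h₂ ∧ p₁ = p₂ ∧ A₁ = A₂ ∧ B₁ = B₂ := by
  -- Step 1: use the S-equations with the Y-derivative of f.
  have hfY := pd_one_toMv f
  have hd1 : PowerSeries.constantCoeff ((Polynomial.derivative f).coeff (n - 1)) ≠ 0 := by
    rw [Polynomial.coeff_derivative, map_mul]
    have : (n - 1 + 1 : ℕ) = n := by omega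
    rw [this]
    apply mul_ne_zero ha0
    rw [map_add, map_one, map_natCast]
    have : ((n - 1 : ℕ) : ℂ) + 1 = ((n : ℕ) : ℂ) := by
      push_cast [Nat.cast_sub (by omega : 1 ≤ n)]; ring
    rw [this]
    exact_mod_cast Nat.cast_ne_zero.mpr (by omega)
  have hd2 : ∀ j ≠ n - 1, PowerSeries.constantCoeff ((Polynomial.derivative f).coeff j) = 0 := by
    intro j hj
    rw [Polynomial.coeff_derivative, map_mul]
    rcases lt_or_ge (j + 1) n with hlt | hge
    · rw [hai (j + 1) hlt, zero_mul]
    · have : f.coeff (j + 1) = 0 :=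
        Polynomial.coeff_eq_zero_of_natDegree_lt (by omega)
      rw [this, map_zero, zero_mul]
  have cB : ∀ (C : Polynomial (PowerSeries ℂ)) (e : ℕ), (C = 0 ∨ C.natDegree < e) →
      ∀ j, e ≤ j → C.coeff j = 0 := by
    rintro C e (rfl | hC) j hj
    · simp
    · exact Polynomial.coeff_eq_zero_of_natDegree_lt (lt_of_lt_of_le hC hj)
  have hBcond : ∀ j, n - 1 ≤ j → (B₂ - B₁).coeff j = 0 := by
    intro j hj
    rw [Polynomial.coeff_sub, cB B₂ (n-1) hB₂ j hj, cB B₁ (n-1) hB₁ j hj, sub_zero]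
  have heqS : (h₁ - h₂) * toMv (Polynomial.derivative f) = toMv (B₂ - B₁) := by
    rw [toMv_sub, ← hfY]
    linear_combination hS₂ - hS₁
  obtain ⟨hh, hBB⟩ := key_division (n - 1) (Polynomial.derivative f) hd1 hd2 _ _ hBcond heqS
  have hh' : h₁ = h₂ := sub_eq_zero.mp hh
  have hBB' : B₁ = B₂ := (sub_eq_zero.mp hBB).symm
  -- Step 2: use the R-equations with f itself.
  have hfj : ∀ j ≠ n, PowerSeries.constantCoeff (f.coeff j) = 0 := by
    intro j hj
    rcases lt_or_ge j n with hlt | hge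
    · exact hai j hlt
    · rw [Polynomial.coeff_eq_zero_of_natDegree_lt (by omega), map_zero]
  have hAcond : ∀ j, n ≤ j → (A₂ - A₁).coeff j = 0 := by
    intro j hj
    rw [Polynomial.coeff_sub, cB A₂ n hA₂ j hj, cB A₁ n hA₁ j hj, sub_zero]
  rw [← hh'] at hR₂
  have heqR : (p₁ - p₂) * toMv f = toMv (A₂ - A₁) := by
    rw [toMv_sub]
    linear_combination hR₂ - hR₁
  obtain ⟨hp, hAA⟩ := key_division n f ha0 hfj _ _ hAcond heqR
  exact ⟨hh', sub_eq_zero.mp hp, (sub_eq_zero.mp hAA).symm, hBB'⟩
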